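/- Double coset decomposition: G = Q·H^{ext} ∪ Q·m_A·H^{ext}, i.e. every g ∈ GSp(4,k) can be written either as g = q·h or as g = q·m_A·h with q ∈ Q and h ∈ H^{ext}, where m_A is the 4×4 matrix with rows (1,0,0,0), (1,1,0,0), (0,0,1,−1), (0,0,0,1). -/

import Mathlib

open Matrix

/-- The 4×4 symplectic form matrix `J = [[0, E], [-E, 0]]` in 2×2-block form. -/
def Jmat (k : Type*) [Field k] : Matrix (Fin 4) (Fin 4) k :=
  !![0, 0, 1, 0;
     0, 0, 0, 1;
     -1, 0, 0, 0;
     0, -1, 0, 0]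

/-- `g` is a symplectic similitude with similitude factor `l`. -/
def SimCond {k : Type*} [Field k] (g : Matrix (Fin 4) (Fin 4) k) (l : kˣ) : Prop :=
  gᵀ * Jmat k * g = (l : k) • Jmat k

/-- The map `Ψ` interleaving a pair of 2×2 matrices into a 4×4 matrix. -/
def PsiMat {k : Type*} [Field k] (g₁ g₂ : Matrix (Fin 2) (Fin 2) k) :
    Matrix (Fin 4) (Fin 4) k :=
  !![g₁ 0 0, 0, g₁ 0 1, 0;
     0, g₂ 0 0, 0, g₂ 0 1;
     g₁ 1 0, 0, g₁ 1 1, 0;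
     0, g₂ 1 0, 0, g₂ 1 1]

/-- `H = {Ψ(g₁,g₂) : g₁, g₂ invertible, det g₁ = det g₂}` as a set of 4×4 matrices. -/
def HSet (k : Type*) [Field k] : Set (Matrix (Fin 4) (Fin 4) k) :=
  {m | ∃ g₁ g₂ : Matrix (Fin 2) (Fin 2) k,
    IsUnit g₁ ∧ IsUnit g₂ ∧ g₁.det = g₂.det ∧ m = PsiMat g₁ g₂}

/-- The involution `κ`, a 4×4 permutation matrix. -/
def kappaMat (k : Type*) [Field k] : Matrix (Fin 4) (Fin 4) k :=
  !![0, 1, 0, 0;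
     1, 0, 0, 0;
     0, 0, 0, 1;
     0, 0, 1, 0]

/-- `H^{ext}`: the subgroup of GL(4,k) generated by `H ∪ {κ}`. -/
def HextSub (k : Type*) [Field k] : Subgroup (GL (Fin 4) k) :=
  Subgroup.closure
    ({u : GL (Fin 4) k | (u : Matrix (Fin 4) (Fin 4) k) ∈ HSet k} ∪
     {u : GL (Fin 4) k | (u : Matrix (Fin 4) (Fin 4) k) = kappaMat k})

/-- The Klingen parabolic `Q`: elements of `GSp(4,k)` stabilizing the line `k·e₁`. -/
def QSet (k : Type*) [Field k] : Set (GL (Fin 4) k) :=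
  {q | (∃ l : kˣ, SimCond (q : Matrix (Fin 4) (Fin 4) k) l) ∧
    ∃ t : k, (q : Matrix (Fin 4) (Fin 4) k).mulVec (Pi.single (0 : Fin 4) (1 : k)) =
      t • (Pi.single (0 : Fin 4) (1 : k) : Fin 4 → k)}

/-- The auxiliary element `m_A`. -/
def mAmat (k : Type*) [Field k] : Matrix (Fin 4) (Fin 4) k :=
  !![1, 0, 0, 0;
     1, 1, 0, 0;
     0, 0, 1, -1;
     0, 0, 0, 1]

section Aux

variable {k : Type*} [Field k]

lemma psi_mul (A B C D : Matrix (Fin 2) (Fin 2) k) :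
    PsiMat A B * PsiMat C D = PsiMat (A * C) (B * D) := by
  ext i j
  fin_cases i <;> fin_cases j <;>
    simp [PsiMat, Matrix.mul_apply, Fin.sum_univ_four, Fin.sum_univ_two,
      Matrix.vecHead, Matrix.vecTail]

lemma psi_one : PsiMat (1 : Matrix (Fin 2) (Fin 2) k) 1 = 1 := by
  ext i j
  fin_cases i <;> fin_cases j <;>
    simp [PsiMat, Matrix.one_apply, Matrix.vecHead, Matrix.vecTail]

/-- Ψ as a unit, given determinant-one inputs. -/
def psiUnit (A B : Matrix (Fin 2) (Fin 2) k) (hA : A.det = 1) (hB : B.det = 1) :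
    GL (Fin 4) k :=
  ⟨PsiMat A B, PsiMat A.adjugate B.adjugate,
   by rw [psi_mul, Matrix.mul_adjugate, Matrix.mul_adjugate, hA, hB, one_smul, psi_one],
   by rw [psi_mul, Matrix.adjugate_mul, Matrix.adjugate_mul, hA, hB, one_smul, psi_one]⟩

@[simp] lemma psiUnit_coe (A B : Matrix (Fin 2) (Fin 2) k) (hA : A.det = 1) (hB : B.det = 1) :
    ((psiUnit A B hA hB : GL (Fin 4) k) : Matrix (Fin 4) (Fin 4) k) = PsiMat A B := rfl

lemma psiUnit_mem (A B : Matrix (Fin 2) (Fin 2) k) (hA : A.det = 1) (hB : B.det = 1) :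
    psiUnit A B hA hB ∈ HextSub k :=
  Subgroup.subset_closure (Or.inl ⟨A, B,
    (Matrix.isUnit_iff_isUnit_det A).2 (hA ▸ isUnit_one),
    (Matrix.isUnit_iff_isUnit_det B).2 (hB ▸ isUnit_one),
    hA.trans hB.symm, rfl⟩)

lemma kappa_mul_kappa : kappaMat k * kappaMat k = 1 := by
  ext i j
  fin_cases i <;> fin_cases j <;>
    simp [kappaMat, Matrix.mul_apply, Fin.sum_univ_four, Matrix.one_apply,
      Matrix.vecHead, Matrix.vecTail]

/-- κ as a unit. -/
def kappaUnit : GL (Fin 4) k :=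
  ⟨kappaMat k, kappaMat k, kappa_mul_kappa, kappa_mul_kappa⟩

@[simp] lemma kappaUnit_coe :
    ((kappaUnit : GL (Fin 4) k) : Matrix (Fin 4) (Fin 4) k) = kappaMat k := rfl

lemma kappaUnit_mem : (kappaUnit : GL (Fin 4) k) ∈ HextSub k :=
  Subgroup.subset_closure (Or.inr rfl)

/-- inverse of m_A -/
def mAinv (k : Type*) [Field k] : Matrix (Fin 4) (Fin 4) k :=
  !![1, 0, 0, 0;
     -1, 1, 0, 0;
     0, 0, 1, 1;
     0, 0, 0, 1]

lemma mAinv_mul_mA : mAinv k * mAmat k = 1 := by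
  ext i j
  fin_cases i <;> fin_cases j <;>
    simp [mAinv, mAmat, Matrix.mul_apply, Fin.sum_univ_four, Matrix.one_apply,
      Matrix.vecHead, Matrix.vecTail]

lemma mA_mul_mAinv : mAmat k * mAinv k = 1 := by
  ext i j
  fin_cases i <;> fin_cases j <;>
    simp [mAinv, mAmat, Matrix.mul_apply, Fin.sum_univ_four, Matrix.one_apply,
      Matrix.vecHead, Matrix.vecTail]

lemma simCond_mul {g h : Matrix (Fin 4) (Fin 4) k} {l m : kˣ}
    (hg : SimCond g l) (hh : SimCond h m) : SimCond (g * h) (l * m) := by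
  unfold SimCond at *
  have h1 : (g * h)ᵀ * Jmat k * (g * h) = hᵀ * (gᵀ * Jmat k * g) * h := by
    rw [Matrix.transpose_mul]; simp only [mul_assoc]
  rw [h1, hg, Matrix.mul_smul, Matrix.smul_mul, hh, smul_smul, Units.val_mul]

lemma det2_lit (a b c d : k) (h : a * d - b * c = 1) : (!![a, b; c, d]).det = 1 := by
  rw [Matrix.det_fin_two_of]; exact h

lemma simCond_psi (a b c d a' b' c' d' : k) (h1 : a * d - b * c = 1)
    (h2 : a' * d' - b' * c' = 1) :
    SimCond (PsiMat !![a, b; c, d] !![a', b'; c', d']) 1 := by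
  unfold SimCond
  rw [Units.val_one, one_smul]
  ext i j
  fin_cases i <;> fin_cases j <;>
    simp [PsiMat, Jmat, Matrix.mul_apply, Fin.sum_univ_four, Matrix.transpose_apply,
      Matrix.vecHead, Matrix.vecTail, -mul_eq_zero, -neg_eq_zero] <;>
    first
      | ring1
      | linear_combination h1
      | linear_combination -h1
      | linear_combination h2
      | linear_combination -h2

lemma simCond_kappa : SimCond (kappaMat k) 1 := by
  unfold SimCond
  rw [Units.val_one, one_smul]
  ext i j
  fin_cases i <;> fin_cases j <;>
    simp [kappaMat, Jmat, Matrix.mul_apply, Fin.sum_univ_four, Matrix.transpose_apply,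
      Matrix.vecHead, Matrix.vecTail]

lemma simCond_mAinv : SimCond (mAinv k) 1 := by
  unfold SimCond
  rw [Units.val_one, one_smul]
  ext i j
  fin_cases i <;> fin_cases j <;>
    simp [mAinv, Jmat, Matrix.mul_apply, Fin.sum_univ_four, Matrix.transpose_apply,
      Matrix.vecHead, Matrix.vecTail]

lemma exists_det_one_col (a c : k) (h : ¬(a = 0 ∧ c = 0)) :
    ∃ b d : k, a * d - b * c = 1 := by
  by_cases ha : a = 0
  · have hc : c ≠ 0 := fun hc => h ⟨ha, hc⟩
    exact ⟨-c⁻¹, 0, by rw [ha]; field_simp; ring⟩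
  · exact ⟨0, a⁻¹, by field_simp; ring⟩

end Aux


section Assemble

variable {k : Type*} [Field k]

/-- m_A⁻¹ as a unit. -/
def mAinvUnit : GL (Fin 4) k :=
  ⟨mAinv k, mAmat k, mAinv_mul_mA, mA_mul_mAinv⟩

lemma assemble_left (g : GL (Fin 4) k) (l : kˣ)
    (hl : SimCond (g : Matrix (Fin 4) (Fin 4) k) l)
    (u : GL (Fin 4) k) (hmem : u ∈ HextSub k) (m : kˣ)
    (hsim : SimCond (u : Matrix (Fin 4) (Fin 4) k) m)
    (huv : (g : Matrix (Fin 4) (Fin 4) k).mulVec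
        ((u : Matrix (Fin 4) (Fin 4) k).mulVec (Pi.single (0 : Fin 4) (1 : k))) =
      Pi.single (0 : Fin 4) (1 : k)) :
    ∃ q ∈ QSet k, ∃ h ∈ HextSub k,
      (g : Matrix (Fin 4) (Fin 4) k) =
        (q : Matrix (Fin 4) (Fin 4) k) * (h : Matrix (Fin 4) (Fin 4) k) := by
  refine ⟨g * u, ⟨⟨l * m, ?_⟩, 1, ?_⟩, u⁻¹, (HextSub k).inv_mem hmem, ?_⟩
  · rw [Units.val_mul]
    exact simCond_mul hl hsim
  · rw [Units.val_mul, one_smul, ← Matrix.mulVec_mulVec]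
    exact huv
  · rw [← Units.val_mul, mul_inv_cancel_right]

lemma assemble_right (g : GL (Fin 4) k) (l : kˣ)
    (hl : SimCond (g : Matrix (Fin 4) (Fin 4) k) l)
    (u : GL (Fin 4) k) (hmem : u ∈ HextSub k) (m : kˣ)
    (hsim : SimCond (u : Matrix (Fin 4) (Fin 4) k) m)
    (huv : (g : Matrix (Fin 4) (Fin 4) k).mulVec
        (((u : Matrix (Fin 4) (Fin 4) k) * mAinv k).mulVec (Pi.single (0 : Fin 4) (1 : k))) =
      Pi.single (0 : Fin 4) (1 : k)) :
    ∃ q ∈ QSet k, ∃ h ∈ HextSub k,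
      (g : Matrix (Fin 4) (Fin 4) k) =
        (q : Matrix (Fin 4) (Fin 4) k) * mAmat k * (h : Matrix (Fin 4) (Fin 4) k) := by
  refine ⟨g * u * mAinvUnit, ⟨⟨l * m * 1, ?_⟩, 1, ?_⟩, u⁻¹, (HextSub k).inv_mem hmem, ?_⟩
  · rw [Units.val_mul, Units.val_mul]
    exact simCond_mul (simCond_mul hl hsim) simCond_mAinv
  · rw [Units.val_mul, Units.val_mul, one_smul]
    show ((g : Matrix (Fin 4) (Fin 4) k) * (u : Matrix (Fin 4) (Fin 4) k) * mAinv k).mulVec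
        (Pi.single (0 : Fin 4) (1 : k)) = Pi.single (0 : Fin 4) (1 : k)
    rw [mul_assoc, ← Matrix.mulVec_mulVec]
    exact huv
  · rw [Units.val_mul, Units.val_mul]
    show (g : Matrix (Fin 4) (Fin 4) k)
        = (g : Matrix (Fin 4) (Fin 4) k) * (u : Matrix (Fin 4) (Fin 4) k) * mAinv k * mAmat k
          * ((u⁻¹ : GL (Fin 4) k) : Matrix (Fin 4) (Fin 4) k)
    rw [mul_assoc ((g : Matrix (Fin 4) (Fin 4) k) * (u : Matrix (Fin 4) (Fin 4) k))
        (mAinv k) (mAmat k), mAinv_mul_mA, mul_one]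
    rw [show ((u⁻¹ : GL (Fin 4) k) : Matrix (Fin 4) (Fin 4) k)
        = ((u : Matrix (Fin 4) (Fin 4) k))⁻¹ from Matrix.coe_units_inv u]
    rw [Matrix.mul_nonsing_inv_cancel_right]
    exact (Matrix.isUnit_iff_isUnit_det _).1 u.isUnit

end Assemble

/-- Double coset decomposition: `G = Q·H^{ext} ∪ Q·m_A·H^{ext}`. -/
theorem stmt12 (k : Type*) [Field k] (g : GL (Fin 4) k)
    (hg : ∃ l : kˣ, SimCond (g : Matrix (Fin 4) (Fin 4) k) l) :
    (∃ q ∈ QSet k, ∃ h ∈ HextSub k,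
      (g : Matrix (Fin 4) (Fin 4) k) =
        (q : Matrix (Fin 4) (Fin 4) k) * (h : Matrix (Fin 4) (Fin 4) k)) ∨
    (∃ q ∈ QSet k, ∃ h ∈ HextSub k,
      (g : Matrix (Fin 4) (Fin 4) k) =
        (q : Matrix (Fin 4) (Fin 4) k) * mAmat k * (h : Matrix (Fin 4) (Fin 4) k)) := by
  classical
  obtain ⟨l, hl⟩ := hg
  have hdet : IsUnit (g : Matrix (Fin 4) (Fin 4) k).det :=
    (Matrix.isUnit_iff_isUnit_det _).1 g.isUnit
  set M : Matrix (Fin 4) (Fin 4) k := (g : Matrix (Fin 4) (Fin 4) k) with hMdef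
  set v : Fin 4 → k := M⁻¹.mulVec (Pi.single (0 : Fin 4) (1 : k)) with hvdef
  have hMv : M.mulVec v = Pi.single (0 : Fin 4) (1 : k) := by
    rw [hvdef, Matrix.mulVec_mulVec, Matrix.mul_nonsing_inv _ hdet, Matrix.one_mulVec]
  by_cases h13 : v 1 = 0 ∧ v 3 = 0
  · by_cases h02 : v 0 = 0 ∧ v 2 = 0
    · exfalso
      have hv0 : v = 0 := by
        funext i; fin_cases i
        · exact h02.1
        · exact h13.1
        · exact h02.2
        · exact h13.2
      rw [hv0, Matrix.mulVec_zero] at hMv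
      have h0 := congrFun hMv 0
      simp [Pi.single_eq_same] at h0
    · -- v lies in span(e₁,e₃)
      obtain ⟨b, d, hbd⟩ := exists_det_one_col (v 0) (v 2) h02
      left
      refine assemble_left g l hl
        (psiUnit !![v 0, b; v 2, d] !![1, 0; 0, 1]
          (det2_lit _ _ _ _ hbd) (det2_lit _ _ _ _ (by ring)))
        (psiUnit_mem _ _ _ _) 1 (simCond_psi _ _ _ _ _ _ _ _ hbd (by ring)) ?_
      have hcol : (PsiMat !![v 0, b; v 2, d] !![1, 0; 0, 1]).mulVec
          (Pi.single (0 : Fin 4) (1 : k)) = v := by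
        funext i
        fin_cases i <;>
          simp [PsiMat, Matrix.mulVec, dotProduct, Fin.sum_univ_four,
            Pi.single_apply, Matrix.vecHead, Matrix.vecTail, h13.1, h13.2]
      rw [psiUnit_coe, hcol]
      exact hMv
  · by_cases h02 : v 0 = 0 ∧ v 2 = 0
    · -- v lies in span(e₂,e₄)
      obtain ⟨b, d, hbd⟩ := exists_det_one_col (v 1) (v 3) h13
      left
      refine assemble_left g l hl
        (psiUnit !![1, 0; 0, 1] !![v 1, b; v 3, d]
          (det2_lit _ _ _ _ (by ring)) (det2_lit _ _ _ _ hbd) * kappaUnit)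
        (mul_mem (psiUnit_mem _ _ _ _) kappaUnit_mem) (1 * 1)
        (by rw [Units.val_mul, psiUnit_coe, kappaUnit_coe]
            exact simCond_mul (simCond_psi _ _ _ _ _ _ _ _ (by ring) hbd) simCond_kappa) ?_
      have hcol : ((PsiMat !![1, 0; 0, 1] !![v 1, b; v 3, d]) * kappaMat k).mulVec
          (Pi.single (0 : Fin 4) (1 : k)) = v := by
        funext i
        fin_cases i <;>
          simp [PsiMat, kappaMat, Matrix.mulVec, dotProduct, Matrix.mul_apply,
            Fin.sum_univ_four, Pi.single_apply, Matrix.vecHead, Matrix.vecTail,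
            h02.1, h02.2]
      rw [Units.val_mul, psiUnit_coe, kappaUnit_coe, hcol]
      exact hMv
    · -- generic case
      obtain ⟨b, d, hbd⟩ := exists_det_one_col (v 0) (v 2) h02
      have h13' : ¬(-(v 1) = 0 ∧ -(v 3) = 0) := by
        intro hcon
        exact h13 ⟨neg_eq_zero.1 hcon.1, neg_eq_zero.1 hcon.2⟩
      obtain ⟨b', d', hbd'⟩ := exists_det_one_col (-(v 1)) (-(v 3)) h13'
      right
      refine assemble_right g l hl
        (psiUnit !![v 0, b; v 2, d] !![-(v 1), b'; -(v 3), d']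
          (det2_lit _ _ _ _ hbd) (det2_lit _ _ _ _ hbd'))
        (psiUnit_mem _ _ _ _) 1 (simCond_psi _ _ _ _ _ _ _ _ hbd hbd') ?_
      have hcol : ((PsiMat !![v 0, b; v 2, d] !![-(v 1), b'; -(v 3), d']) * mAinv k).mulVec
          (Pi.single (0 : Fin 4) (1 : k)) = v := by
        funext i
        fin_cases i <;>
          simp [PsiMat, mAinv, Matrix.mulVec, dotProduct, Matrix.mul_apply,
            Fin.sum_univ_four, Pi.single_apply, Matrix.vecHead, Matrix.vecTail]
      rw [psiUnit_coe, hcol]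
      exact hMv
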